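/- Let M be an m×n matrix over ZMod 2, let R = M * V be a reduction of M, let j be a column index with column j of R nonzero, and let i be a row index. Writing r(i,j) for the rank of the lower-left submatrix of M with rows ≥ i and columns ≤ j (with r(i,j) = 0 when the row range or column range is empty), one has low_R(j) = i if and only if r(i,j) − r(i+1,j) − r(i,j−1) + r(i+1,j−1) = 1. -/

import Mathlib

open Matrix

/-- `i` is the lowest nonzero row index of column `j` of `R`. -/
def IsLow {m n : ℕ} (R : Matrix (Fin m) (Fin n) (ZMod 2)) (j : Fin n) (i : Fin m) : Prop :=
  R i j ≠ 0 ∧ ∀ i' : Fin m, R i' j ≠ 0 → i' ≤ i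

/-- No two distinct nonzero columns of `R` have the same lowest nonzero row index. -/
def Reduced {m n : ℕ} (R : Matrix (Fin m) (Fin n) (ZMod 2)) : Prop :=
  ∀ j k : Fin n, j ≠ k → ∀ i i' : Fin m, IsLow R j i → IsLow R k i' → i ≠ i'

/-- `W` is upper-triangular: `W i j = 0` whenever `i > j`. -/
def UpperTri {n : ℕ} (W : Matrix (Fin n) (Fin n) (ZMod 2)) : Prop :=
  ∀ i j : Fin n, j < i → W i j = 0

/-- Rank of the lower-left submatrix of `M` consisting of rows with index `≥ i` and columns
with index `< k` (indices read as natural numbers). It is `0` when either range is empty.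
`r(i,j)` of the paper, with columns `≤ j`, is `llRankN M i (j+1)`. -/
noncomputable def llRankN {m n : ℕ} (M : Matrix (Fin m) (Fin n) (ZMod 2)) (i k : ℕ) : ℕ :=
  (M.submatrix (fun a : {a : Fin m // i ≤ a.1} => a.1)
    (fun b : {b : Fin n // b.1 < k} => b.1)).rank

lemma llRank_inv {m n : ℕ} (M : Matrix (Fin m) (Fin n) (ZMod 2))
    (W : Matrix (Fin n) (Fin n) (ZMod 2)) (hW : IsUnit W) (hUT : UpperTri W) (i k : ℕ) :
    llRankN M i k = llRankN (M * W) i k := by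
  classical
  set Wk : Matrix {b : Fin n // b.1 < k} {b : Fin n // b.1 < k} (ZMod 2) :=
    W.submatrix (fun b => b.1) (fun b => b.1) with hWk
  have hprod : (M * W).submatrix (fun a : {a : Fin m // i ≤ a.1} => a.1)
      (fun b : {b : Fin n // b.1 < k} => b.1)
      = (M.submatrix (fun a : {a : Fin m // i ≤ a.1} => a.1)
          (fun b : {b : Fin n // b.1 < k} => b.1)) * Wk := by
    ext a b
    simp only [Matrix.submatrix_apply, Matrix.mul_apply, hWk]
    rw [show (∑ x : {b : Fin n // b.1 < k}, M a.1 x.1 * W x.1 b.1)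
        = ∑ x ∈ Finset.univ.filter (fun x : Fin n => x.1 < k), M a.1 x * W x b.1 from
      (Finset.sum_subtype (p := fun x : Fin n => x.1 < k)
        (Finset.univ.filter fun x : Fin n => x.1 < k) (fun x => by simp)
        (fun x => M a.1 x * W x b.1)).symm]
    refine (Finset.sum_subset (Finset.filter_subset _ _) ?_).symm
    intro x _ hx
    simp only [Finset.mem_filter, Finset.mem_univ, true_and, not_lt] at hx
    have : W x b.1 = 0 := hUT x b.1 (by exact Fin.lt_def.mpr (lt_of_lt_of_le b.2 hx))
    simp [this]
  have hdiag : ∀ x : Fin n, W x x ≠ 0 := by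
    have hBT : W.BlockTriangular id := fun a b h => hUT a b h
    have hdet : IsUnit W.det := hW.map (Matrix.detMonoidHom)
    rw [Matrix.det_of_upperTriangular hBT] at hdet
    intro x hx
    rw [Finset.prod_eq_zero (f := fun i => W i i) (Finset.mem_univ x) hx] at hdet
    exact hdet.ne_zero rfl
  have hWkBT : Wk.BlockTriangular id := by
    intro a b h
    exact hUT a.1 b.1 (by exact_mod_cast h)
  have hWkdet : IsUnit Wk.det := by
    rw [Matrix.det_of_upperTriangular hWkBT]
    exact isUnit_iff_ne_zero.mpr (Finset.prod_ne_zero_iff.mpr fun b _ => hdiag b.1)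
  unfold llRankN
  rw [hprod, Matrix.rank_mul_eq_left_of_isUnit_det _ _ hWkdet]

lemma exists_isLow {m n : ℕ} {R : Matrix (Fin m) (Fin n) (ZMod 2)} {j : Fin n}
    (h : ∃ i0 : Fin m, R i0 j ≠ 0) : ∃ i', IsLow R j i' := by
  classical
  obtain ⟨i0, hi0⟩ := h
  set t := Finset.univ.filter fun i' : Fin m => R i' j ≠ 0 with ht
  have hne : t.Nonempty := ⟨i0, by simp [ht, hi0]⟩
  refine ⟨t.max' hne, ?_, ?_⟩
  · have := t.max'_mem hne
    simpa [ht] using this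
  · intro i' hi'
    exact t.le_max' i' (by simp [ht, hi'])

lemma isLow_unique {m n : ℕ} {R : Matrix (Fin m) (Fin n) (ZMod 2)} {j : Fin n} {i1 i2 : Fin m}
    (h1 : IsLow R j i1) (h2 : IsLow R j i2) : i1 = i2 :=
  le_antisymm (h2.2 _ h1.1) (h1.2 _ h2.1)

open Classical in
lemma rank_eq_count {m n : ℕ} (R : Matrix (Fin m) (Fin n) (ZMod 2)) (hRed : Reduced R)
    (i k : ℕ) :
    (R.submatrix (fun a : {a : Fin m // i ≤ a.1} => a.1)
      (fun b : {b : Fin n // b.1 < k} => b.1)).rank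
    = (Finset.univ.filter fun j' : Fin n =>
        j'.1 < k ∧ ∃ i', IsLow R j' i' ∧ i ≤ i'.1).card := by
  classical
  set A := R.submatrix (fun a : {a : Fin m // i ≤ a.1} => a.1)
      (fun b : {b : Fin n // b.1 < k} => b.1) with hA
  set s : Finset {b : Fin n // b.1 < k} := Finset.univ.filter (fun b => Aᵀ b ≠ 0) with hs
  have hlow : ∀ b : {b : Fin n // b.1 < k}, b ∈ s →
      ∃ i' : Fin m, IsLow R b.1 i' ∧ i ≤ i'.1 := by
    intro b hb
    rw [hs, Finset.mem_filter] at hb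
    obtain ⟨a', ha'⟩ := Function.ne_iff.mp hb.2
    obtain ⟨i', hi'⟩ := exists_isLow ⟨a'.1, ha'⟩
    exact ⟨i', hi', le_trans a'.2 (hi'.2 _ ha')⟩
  have hli : LinearIndependent (ZMod 2) (fun b : ↥s => Aᵀ b.1) := by
    rw [Fintype.linearIndependent_iff]
    intro g hg
    by_contra hcon
    push_neg at hcon
    set t : Finset ↥s := Finset.univ.filter (fun b => g b ≠ 0) with ht
    have htne : t.Nonempty := by
      obtain ⟨b1, hb1⟩ := hcon
      exact ⟨b1, by simp [ht, hb1]⟩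
    choose ℓ hℓ hℓi using fun (b : ↥s) => hlow b.1 b.2
    obtain ⟨b0, hb0t, hb0max⟩ := t.exists_max_image ℓ htne
    have hrow : i ≤ (ℓ b0).1 := hℓi b0
    have hsum := congrFun hg ⟨ℓ b0, hrow⟩
    rw [Finset.sum_apply] at hsum
    rw [← Finset.sum_subset (Finset.subset_univ t)
        (fun x _ hx => by
          have : g x = 0 := by simpa [ht] using hx
          simp [this])] at hsum
    rw [Finset.sum_eq_single b0
        (fun b hbt hbne => by
          have hjne : (b.1 : Fin n) ≠ b0.1 := by
            intro hvv
            exact hbne (Subtype.ext (Subtype.ext hvv))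
          have hlne : ℓ b ≠ ℓ b0 := hRed _ _ hjne _ _ (hℓ b) (hℓ b0)
          have hlt : ℓ b < ℓ b0 := lt_of_le_of_ne (hb0max b hbt) hlne
          have hz : R (ℓ b0) b.1.1 = 0 := by
            by_contra hnz
            exact absurd ((hℓ b).2 _ hnz) (not_le.mpr hlt)
          simp [hA, hz])
        (fun habs => absurd hb0t habs)] at hsum
    have : R (ℓ b0) b0.1.1 ≠ 0 := (hℓ b0).1
    have hg0 : g b0 ≠ 0 := by simpa [ht] using hb0t
    simp only [Pi.smul_apply, Matrix.transpose_apply, hA, Matrix.submatrix_apply,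
      smul_eq_mul] at hsum
    exact (mul_ne_zero hg0 this) hsum
  have hrank : A.rank = s.card := by
    rw [Matrix.rank_eq_finrank_span_cols]
    have hspan : Submodule.span (ZMod 2) (Set.range Aᵀ)
        = Submodule.span (ZMod 2) (Set.range (fun b : ↥s => Aᵀ b.1)) := by
      apply le_antisymm
      · rw [Submodule.span_le]
        rintro _ ⟨b, rfl⟩
        by_cases hb : Aᵀ b = 0
        · rw [hb]; exact Submodule.zero_mem _
        · exact Submodule.subset_span ⟨⟨b, by simp [hs, hb]⟩, rfl⟩
      · exact Submodule.span_mono (by rintro _ ⟨b, rfl⟩; exact ⟨b.1, rfl⟩)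
    rw [show Set.range A.col = Set.range Aᵀ from rfl, hspan, finrank_span_eq_card hli, Fintype.card_coe]
  rw [hrank]
  refine Finset.card_bij (fun b _ => b.1) ?_ ?_ ?_
  · intro b hb
    simp only [Finset.mem_filter, Finset.mem_univ, true_and]
    exact ⟨b.2, hlow b hb⟩
  · intro b1 h1 b2 h2 hv
    exact Subtype.ext hv
  · intro j' hj'
    simp only [Finset.mem_filter, Finset.mem_univ, true_and] at hj'
    obtain ⟨hk, i', hi', hii'⟩ := hj'
    refine ⟨⟨j', hk⟩, ?_, rfl⟩
    rw [hs, Finset.mem_filter]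
    refine ⟨Finset.mem_univ _, ?_⟩
    apply Function.ne_iff.mpr
    exact ⟨⟨i', hii'⟩, by simpa [hA] using hi'.1⟩

open Classical in
noncomputable def cnt {m n : ℕ} (R : Matrix (Fin m) (Fin n) (ZMod 2)) (a k : ℕ) : ℕ :=
  (Finset.univ.filter fun j' : Fin n => j'.1 < k ∧ ∃ i', IsLow R j' i' ∧ a ≤ i'.1).card

open Classical in
lemma cnt_succ {m n : ℕ} (R : Matrix (Fin m) (Fin n) (ZMod 2)) (j : Fin n) (a : ℕ) :
    cnt R a (j.1 + 1)
      = cnt R a j.1 + (if ∃ i', IsLow R j i' ∧ a ≤ i'.1 then 1 else 0) := by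
  classical
  set P : Fin n → Prop := fun j' => ∃ i', IsLow R j' i' ∧ a ≤ i'.1 with hP
  unfold cnt
  have hiff : ∀ j' : Fin n, (j'.1 < j.1 + 1 ∧ P j') ↔ ((j'.1 < j.1 ∧ P j') ∨ (j' = j ∧ P j')) := by
    intro j'
    constructor
    · rintro ⟨hlt, hp⟩
      rcases Nat.lt_succ_iff_lt_or_eq.mp hlt with h | h
      · exact Or.inl ⟨h, hp⟩
      · exact Or.inr ⟨Fin.ext h, hp⟩
    · rintro (⟨hlt, hp⟩ | ⟨rfl, hp⟩)
      · exact ⟨Nat.lt_succ_of_lt hlt, hp⟩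
      · exact ⟨Nat.lt_succ_self _, hp⟩
  rw [Finset.filter_congr (fun x _ => hiff x), Finset.filter_or,
    Finset.card_union_of_disjoint (by
      rw [Finset.disjoint_left]
      intro x hx1 hx2
      simp only [Finset.mem_filter] at hx1 hx2
      obtain ⟨_, rfl, _⟩ := hx2
      exact absurd hx1.2.1 (lt_irrefl _))]
  congr 1
  by_cases hPj : P j
  · rw [Finset.filter_congr (q := fun j' => j' = j)
      (fun x _ => ⟨fun h => h.1, fun h => ⟨h, h ▸ hPj⟩⟩), Finset.filter_eq']
    simp only [Finset.mem_univ, if_true, Finset.card_singleton]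
    exact (if_pos hPj).symm
  · rw [if_neg hPj]
    rw [Finset.filter_false_of_mem (fun x _ => fun (h : x = j ∧ P x) => hPj (h.1 ▸ h.2))]
    simp

theorem isLow_iff_rank_formula {m n : ℕ} (M : Matrix (Fin m) (Fin n) (ZMod 2))
    (W : Matrix (Fin n) (Fin n) (ZMod 2)) (hW : IsUnit W) (hUT : UpperTri W)
    (hRed : Reduced (M * W)) (j : Fin n) (hj : ∃ i0 : Fin m, (M * W) i0 j ≠ 0) (i : Fin m) :
    IsLow (M * W) j i ↔
      (llRankN M i.1 (j.1 + 1) : ℤ) - llRankN M (i.1 + 1) (j.1 + 1)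
        - llRankN M i.1 j.1 + llRankN M (i.1 + 1) j.1 = 1 := by
  classical
  have hcnt : ∀ a k : ℕ, llRankN M a k = cnt (M * W) a k := by
    intro a k
    rw [llRank_inv M W hW hUT a k]
    exact (rank_eq_count (M * W) hRed a k).trans (by unfold cnt; congr 1)
  obtain ⟨i0, hi0⟩ := exists_isLow hj
  have hE : ∀ a : ℕ, (∃ i', IsLow (M * W) j i' ∧ a ≤ i'.1) ↔ a ≤ i0.1 := by
    intro a
    constructor
    · rintro ⟨i', h', ha⟩
      rwa [isLow_unique h' hi0] at ha
    · intro ha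
      exact ⟨i0, hi0, ha⟩
  rw [hcnt, hcnt, hcnt, hcnt, cnt_succ, cnt_succ]
  have hlowiff : IsLow (M * W) j i ↔ i.1 = i0.1 := by
    constructor
    · intro h
      rw [isLow_unique h hi0]
    · intro h
      rwa [show i = i0 from Fin.ext h]
  rw [hlowiff]
  push_cast
  rw [if_congr (hE i.1) rfl rfl, if_congr (hE (i.1 + 1)) rfl rfl]
  by_cases h1 : i.1 ≤ i0.1 <;> by_cases h2 : i.1 + 1 ≤ i0.1 <;>
    simp only [if_pos, if_neg, h1, h2, if_true, if_false] <;> omega
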